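/- Let A be a real symmetric tensor of even order k and dimension n. Then λ_min(A) = min{ A x^k : x ∈ ℝ^n, ||x||_k = 1 }, where λ_min(A) denotes the least H-eigenvalue of A, A x^k = Σ a_{i1...ik} x_{i1}···x_{ik}, and ||x||_k = (Σ |x_i|^k)^{1/k}. Moreover, x attains the minimum if and only if x is an eigenvector of A associated with λ_min(A). -/

import Mathlib

open Finset BigOperators

/-- The value `A x^k = ∑ a_{i1...ik} x_{i1} ⋯ x_{ik}` of a tensor on a vector. -/
def tApply {n k : ℕ} (A : (Fin k → Fin n) → ℝ) (x : Fin n → ℝ) : ℝ :=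
  ∑ f : Fin k → Fin n, A f * ∏ j, x (f j)

/-- A tensor is symmetric if its entries are invariant under permutations of the indices. -/
def SymT {n k : ℕ} (A : (Fin k → Fin n) → ℝ) : Prop :=
  ∀ (σ : Equiv.Perm (Fin k)) (f : Fin k → Fin n), A (f ∘ σ) = A f

/-- The H-eigenvector equation `(A x^{k-1})_i = lam * x_i^{k-1}` for all `i`. -/
def tEig {n k : ℕ} [NeZero k] (A : (Fin k → Fin n) → ℝ) (lam : ℝ) (x : Fin n → ℝ) : Prop :=
  ∀ i : Fin n,
    (∑ f : Fin k → Fin n,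
      if f 0 = i then A f * ∏ j ∈ Finset.univ.erase (0 : Fin k), x (f j) else 0)
    = lam * x i ^ (k - 1)

/-- The set of H-eigenvalues of a tensor. -/
def specT {n k : ℕ} [NeZero k] (A : (Fin k → Fin n) → ℝ) : Set ℝ :=
  {lam | ∃ x : Fin n → ℝ, x ≠ 0 ∧ tEig A lam x}

/-- The least H-eigenvalue of a tensor. -/
noncomputable def lamMinT {n k : ℕ} [NeZero k] (A : (Fin k → Fin n) → ℝ) : ℝ :=
  sInf (specT A)

section aux
variable {n k : ℕ} [NeZero k] (A : (Fin k → Fin n) → ℝ) (x : Fin n → ℝ)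

def gApp (i : Fin n) : ℝ :=
  ∑ f : Fin k → Fin n,
    if f 0 = i then A f * ∏ j ∈ Finset.univ.erase (0 : Fin k), x (f j) else 0

lemma tEig_iff (lam : ℝ) : tEig A lam x ↔ ∀ i, gApp A x i = lam * x i ^ (k - 1) := Iff.rfl

lemma regroup (v : Fin n → ℝ) :
    ∑ f : Fin k → Fin n, A f * (∏ l ∈ Finset.univ.erase (0 : Fin k), x (f l)) * v (f 0)
      = ∑ i, v i * gApp A x i := by
  unfold gApp
  symm
  simp only [Finset.mul_sum, mul_ite, mul_zero]
  rw [Finset.sum_comm]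
  refine Finset.sum_congr rfl fun f _ => ?_
  rw [Finset.sum_ite_eq Finset.univ (f 0)
    (fun i => v i * (A f * ∏ j ∈ Finset.univ.erase (0 : Fin k), x (f j)))]
  simp [mul_comm, mul_assoc, mul_left_comm]

lemma euler : tApply A x = ∑ i, x i * gApp A x i := by
  rw [← regroup]
  refine Finset.sum_congr rfl fun f _ => ?_
  rw [← Finset.mul_prod_erase Finset.univ (fun j => x (f j)) (Finset.mem_univ (0 : Fin k))]
  ring

lemma sym_term (hA : SymT A) (v : Fin n → ℝ) (j : Fin k) :
    ∑ f : Fin k → Fin n, A f * ((∏ l ∈ Finset.univ.erase j, x (f l)) * v (f j))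
      = ∑ f : Fin k → Fin n, A f * ((∏ l ∈ Finset.univ.erase (0 : Fin k), x (f l)) * v (f 0)) := by
  set σ := Equiv.swap (0 : Fin k) j with hσ
  have h0 : σ 0 = j := Equiv.swap_apply_left _ _
  have hj : σ j = 0 := Equiv.swap_apply_right _ _
  rw [← Equiv.sum_comp (Equiv.arrowCongr σ.symm (Equiv.refl (Fin n)))
    (fun f => A f * ((∏ l ∈ Finset.univ.erase (0 : Fin k), x (f l)) * v (f 0)))]
  refine Finset.sum_congr rfl fun f _ => ?_
  have hfa : (Equiv.arrowCongr σ.symm (Equiv.refl (Fin n))) f = f ∘ σ := by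
    ext l; simp [Equiv.arrowCongr]
  rw [hfa, hA σ f]
  simp only [Function.comp_apply, h0]
  congr 1
  congr 1
  refine Finset.prod_nbij' (fun l => σ l) (fun l => σ l) ?_ ?_ ?_ ?_ ?_
  · intro l hl
    simp only [Finset.mem_erase, Finset.mem_univ, and_true] at hl ⊢
    intro h; exact hl (σ.injective (h.trans hj.symm))
  · intro l hl
    simp only [Finset.mem_erase, Finset.mem_univ, and_true] at hl ⊢
    intro h; exact hl (σ.injective (h.trans h0.symm))
  · intro l _; exact Equiv.swap_apply_self _ _ _
  · intro l _; exact Equiv.swap_apply_self _ _ _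
  · intro l _; rw [Equiv.swap_apply_self]

noncomputable def tDer : (Fin n → ℝ) →L[ℝ] ℝ :=
  ∑ f : Fin k → Fin n, A f •
    ∑ j : Fin k, (∏ l ∈ Finset.univ.erase j, x (f l)) •
      ContinuousLinearMap.proj (R := ℝ) (φ := fun _ : Fin n => ℝ) (f j)

lemma tDer_apply (hA : SymT A) (v : Fin n → ℝ) :
    tDer A x v = (k : ℝ) * ∑ i, v i * gApp A x i := by
  have h1 : tDer A x v = ∑ f : Fin k → Fin n, A f *
      ∑ j : Fin k, (∏ l ∈ Finset.univ.erase j, x (f l)) * v (f j) := by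
    simp [tDer, ContinuousLinearMap.sum_apply, mul_comm]
  have h2 : ∑ f : Fin k → Fin n, A f *
      ∑ j : Fin k, (∏ l ∈ Finset.univ.erase j, x (f l)) * v (f j)
      = (k : ℝ) * ∑ f : Fin k → Fin n,
        A f * ((∏ l ∈ Finset.univ.erase (0 : Fin k), x (f l)) * v (f 0)) := by
    simp only [Finset.mul_sum]
    rw [Finset.sum_comm]
    rw [Finset.sum_congr rfl (fun j _ => sym_term A x hA v j)]
    rw [Finset.sum_const, Finset.card_univ, Fintype.card_fin, nsmul_eq_mul,
      Finset.mul_sum]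
  rw [h1, h2]
  congr 1
  rw [← regroup]
  refine Finset.sum_congr rfl fun f _ => ?_
  ring

lemma tDer_hasStrict : HasStrictFDerivAt (tApply A) (tDer A x) x := by
  unfold tApply tDer
  apply HasStrictFDerivAt.fun_sum
  intro f _
  exact (HasStrictFDerivAt.finset_prod (fun j _ =>
    (ContinuousLinearMap.proj (R := ℝ) (φ := fun _ : Fin n => ℝ) (f j)).hasStrictFDerivAt)).const_mul (A f)

noncomputable def nDer (k : ℕ) (x : Fin n → ℝ) : (Fin n → ℝ) →L[ℝ] ℝ :=
  ∑ i : Fin n, ((k : ℝ) * x i ^ (k - 1)) •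
    ContinuousLinearMap.proj (R := ℝ) (φ := fun _ : Fin n => ℝ) i

lemma nDer_apply (v : Fin n → ℝ) :
    nDer k x v = ∑ i, (k : ℝ) * x i ^ (k - 1) * v i := by
  simp [nDer, ContinuousLinearMap.sum_apply]

lemma nDer_hasStrict : HasStrictFDerivAt (fun y : Fin n → ℝ => ∑ i, y i ^ k) (nDer k x) x := by
  unfold nDer
  apply HasStrictFDerivAt.fun_sum
  intro i _
  have h := (hasStrictDerivAt_pow k (x i)).comp_hasStrictFDerivAt x
    (ContinuousLinearMap.proj (R := ℝ) (φ := fun _ : Fin n => ℝ) i).hasStrictFDerivAt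
  exact h

lemma pow_pred_mul (hk : 1 ≤ k) (a : ℝ) : a ^ (k - 1) * a = a ^ k := by
  rw [← pow_succ, Nat.sub_add_cancel hk]

/-- Lagrange multiplier argument at a constrained minimizer. -/
lemma lagrange (hA : SymT A) (x₀ : Fin n → ℝ) (h1 : ∑ i, x₀ i ^ k = 1)
    (hmin : IsMinOn (tApply A) {y : Fin n → ℝ | ∑ i, y i ^ k = 1} x₀) :
    tEig A (tApply A x₀) x₀ := by
  have hk1 : 1 ≤ k := Nat.one_le_iff_ne_zero.mpr (NeZero.ne k)
  have hextr : IsLocalExtrOn (tApply A)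
      {y : Fin n → ℝ | (fun z : Fin n → ℝ => ∑ i, z i ^ k) y
        = (fun z : Fin n → ℝ => ∑ i, z i ^ k) x₀} x₀ := by
    simp only [h1]
    exact hmin.localize.isExtr
  obtain ⟨a, b, hab, heq⟩ := hextr.exists_multipliers_of_hasStrictFDerivAt_1d
    (nDer_hasStrict (k := k) x₀) (tDer_hasStrict A x₀)
  set m := tApply A x₀ with hm
  have happ : ∀ v, a * nDer k x₀ v + b * tDer A x₀ v = 0 := by
    intro v
    have := congrArg (fun L : (Fin n → ℝ) →L[ℝ] ℝ => L v) heq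
    simpa using this
  have hnx : nDer k x₀ x₀ = (k : ℝ) := by
    rw [nDer_apply]
    have : ∀ i, (k : ℝ) * x₀ i ^ (k - 1) * x₀ i = (k : ℝ) * x₀ i ^ k := by
      intro i; rw [mul_assoc, pow_pred_mul hk1]
    rw [Finset.sum_congr rfl fun i _ => this i, ← Finset.mul_sum, h1, mul_one]
  have htx : tDer A x₀ x₀ = (k : ℝ) * m := by
    rw [tDer_apply A x₀ hA, ← euler, hm]
  have hk0 : (k : ℝ) ≠ 0 := Nat.cast_ne_zero.mpr (NeZero.ne k)
  have hb : b ≠ 0 := by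
    intro hb0
    have ha := happ x₀
    rw [hb0, hnx, htx] at ha
    have : a = 0 := by
      have ha' : a * (k : ℝ) = 0 := by linarith
      exact (mul_eq_zero.mp ha').resolve_right hk0
    exact hab (by simp [Prod.ext_iff, this, hb0])
  have ham : a = -(b * m) := by
    have ha := happ x₀
    rw [hnx, htx] at ha
    have h2 : (a + b * m) * (k : ℝ) = 0 := by ring_nf; ring_nf at ha; linarith
    rcases mul_eq_zero.mp h2 with h | h
    · linarith
    · exact absurd h hk0
  intro i
  have hv := happ (Pi.single i 1)
  have hn1 : nDer k x₀ (Pi.single i 1) = (k : ℝ) * x₀ i ^ (k - 1) := by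
    rw [nDer_apply]
    rw [Finset.sum_eq_single i]
    · simp
    · intro j _ hj; simp [Pi.single_apply, hj]
    · simp
  have ht1 : tDer A x₀ (Pi.single i 1) = (k : ℝ) * gApp A x₀ i := by
    rw [tDer_apply A x₀ hA]
    congr 1
    rw [Finset.sum_eq_single i]
    · simp
    · intro j _ hj; simp [Pi.single_apply, hj]
    · simp
  rw [hn1, ht1, ham] at hv
  show gApp A x₀ i = m * x₀ i ^ (k - 1)
  have : b * (k : ℝ) * (gApp A x₀ i - m * x₀ i ^ (k - 1)) = 0 := by ring_nf; ring_nf at hv; linarith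
  have h3 := mul_eq_zero.mp this
  rcases h3 with h | h
  · rcases mul_eq_zero.mp h with h' | h'
    · exact absurd h' hb
    · exact absurd h' hk0
  · linarith

lemma tApply_smul (c : ℝ) : tApply A (c • x) = c ^ k * tApply A x := by
  unfold tApply
  rw [Finset.mul_sum]
  refine Finset.sum_congr rfl fun f _ => ?_
  simp only [Pi.smul_apply, smul_eq_mul]
  rw [Finset.prod_mul_distrib, Finset.prod_const, Finset.card_univ, Fintype.card_fin]
  ring

lemma eig_val (lam : ℝ) (h : tEig A lam x) :
    tApply A x = lam * ∑ i, x i ^ k := by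
  have hk1 : 1 ≤ k := Nat.one_le_iff_ne_zero.mpr (NeZero.ne k)
  rw [euler A x, Finset.mul_sum]
  refine Finset.sum_congr rfl fun i _ => ?_
  rw [show gApp A x i = lam * x i ^ (k - 1) from h i, ← pow_pred_mul (k := k) hk1]
  ring

end aux


/-- For a real symmetric tensor of even order `k`,
`λ_min(A) = min { A x^k : ‖x‖_k = 1 }`, and the minimum is attained exactly
at eigenvectors associated with `λ_min(A)`. -/
theorem stmt2 {n k : ℕ} [NeZero k] (hk : Even k) (hn : 0 < n)
    (A : (Fin k → Fin n) → ℝ) (hA : SymT A) :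
    IsLeast {r : ℝ | ∃ x : Fin n → ℝ, (∑ i, |x i| ^ k) = 1 ∧ tApply A x = r} (lamMinT A) ∧
    ∀ x : Fin n → ℝ, (∑ i, |x i| ^ k) = 1 →
      (tApply A x = lamMinT A ↔ tEig A (lamMinT A) x) := by
  have hk1 : 1 ≤ k := Nat.one_le_iff_ne_zero.mpr (NeZero.ne k)
  have habs : ∀ y : Fin n → ℝ, (∑ i, |y i| ^ k) = ∑ i, y i ^ k := fun y =>
    Finset.sum_congr rfl fun i _ => hk.pow_abs _
  set S := {y : Fin n → ℝ | ∑ i, y i ^ k = 1} with hS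
  have hgc : Continuous (fun y : Fin n → ℝ => ∑ i, y i ^ k) :=
    continuous_finset_sum _ fun i _ => (continuous_apply i).pow k
  have htc : Continuous (tApply A) :=
    continuous_finset_sum _ fun f _ => continuous_const.mul
      (continuous_finset_prod _ fun j _ => continuous_apply (f j))
  have hSclosed : IsClosed S := isClosed_eq hgc continuous_const
  have hSsub : S ⊆ Metric.closedBall 0 1 := by
    intro y hy
    rw [Metric.mem_closedBall, dist_zero_right]
    rw [pi_norm_le_iff_of_nonneg zero_le_one]
    intro i
    rw [Real.norm_eq_abs]
    have h1i : |y i| ^ k ≤ 1 := by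
      calc |y i| ^ k ≤ ∑ j, |y j| ^ k :=
            Finset.single_le_sum (f := fun j => |y j| ^ k)
              (fun j _ => pow_nonneg (abs_nonneg _) k) (Finset.mem_univ i)
        _ = ∑ j, y j ^ k := habs y
        _ = 1 := hy
    exact (pow_le_one_iff_of_nonneg (abs_nonneg _) (NeZero.ne k)).mp h1i
  have hScompact : IsCompact S :=
    (isCompact_closedBall (0 : Fin n → ℝ) 1).of_isClosed_subset hSclosed hSsub
  have hSne : S.Nonempty := by
    have hone : ∑ i, (Pi.single (⟨0, hn⟩ : Fin n) (1:ℝ) : Fin n → ℝ) i ^ k = 1 := by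
      rw [Finset.sum_eq_single (⟨0, hn⟩ : Fin n)]
      · simp
      · intro j _ hj; simp [Pi.single_apply, hj, zero_pow (NeZero.ne k)]
      · simp
    exact ⟨_, hone⟩
  obtain ⟨x₀, hx₀S, hx₀min⟩ := hScompact.exists_isMinOn hSne htc.continuousOn
  set m := tApply A x₀ with hm
  have heig₀ : tEig A m x₀ := lagrange A hA x₀ hx₀S hx₀min
  have hx₀ne : x₀ ≠ 0 := by
    intro h
    rw [hS] at hx₀S
    rw [h] at hx₀S
    simp [zero_pow (NeZero.ne k)] at hx₀S
  have hmem : m ∈ specT A := ⟨x₀, hx₀ne, heig₀⟩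
  have hlb : ∀ lam ∈ specT A, m ≤ lam := by
    rintro lam ⟨y, hy0, hyeig⟩
    set s := ∑ i, y i ^ k with hsd
    have hgy : (0:ℝ) < s := by
      rw [hsd, ← habs y]
      obtain ⟨i, hi⟩ := Function.ne_iff.mp hy0
      exact Finset.sum_pos' (fun j _ => pow_nonneg (abs_nonneg _) _)
        ⟨i, Finset.mem_univ i, pow_pos (abs_pos.mpr hi) k⟩
    have hyval : tApply A y = lam * s := eig_val A y lam hyeig
    set c := (s ^ ((k:ℝ)⁻¹))⁻¹ with hcd
    have hck : c ^ k = s⁻¹ := by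
      rw [hcd, inv_pow]
      congr 1
      rw [← Real.rpow_natCast (s ^ ((k:ℝ)⁻¹)) k, ← Real.rpow_mul hgy.le,
        inv_mul_cancel₀ (show (k:ℝ) ≠ 0 by exact_mod_cast NeZero.ne k), Real.rpow_one]
    have hmem' : c • y ∈ S := by
      show ∑ i, (c • y) i ^ k = 1
      have heach : ∀ i, (c • y) i ^ k = c ^ k * y i ^ k := fun i => by
        simp [mul_pow]
      rw [Finset.sum_congr rfl fun i _ => heach i, ← Finset.mul_sum, hck, ← hsd,
        inv_mul_cancel₀ hgy.ne']
    have hle : m ≤ tApply A (c • y) := isMinOn_iff.mp hx₀min _ hmem'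
    rw [tApply_smul, hyval, hck] at hle
    calc m ≤ s⁻¹ * (lam * s) := hle
      _ = lam := by field_simp
  have hspec : lamMinT A = m :=
    le_antisymm (csInf_le ⟨m, hlb⟩ hmem) (le_csInf ⟨m, hmem⟩ hlb)
  constructor
  · constructor
    · exact ⟨x₀, by rw [habs x₀]; exact hx₀S, hspec.symm⟩
    · rintro r ⟨y, hy1, rfl⟩
      rw [hspec]
      exact isMinOn_iff.mp hx₀min y (by rw [hS, Set.mem_setOf_eq, ← habs y]; exact hy1)
  · intro y hy1
    have hyS : y ∈ S := by rw [hS, Set.mem_setOf_eq, ← habs y]; exact hy1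
    constructor
    · intro hval
      have hminy : IsMinOn (tApply A) S y := by
        rw [isMinOn_iff]
        intro z hz
        rw [hval, hspec]
        exact isMinOn_iff.mp hx₀min z hz
      have := lagrange A hA y hyS hminy
      rwa [hval] at this
    · intro heig
      rw [eig_val A y (lamMinT A) heig, hyS, mul_one]
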